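/- Every graph Γ on n vertices has at most 3^{n/3} maximal independent sets. -/

import Mathlib

/-- The collection of maximal independent sets of a simple graph. -/
def maxIndepSets {V : Type*} (Γ : SimpleGraph V) : Set (Set V) :=
  {I | (∀ x ∈ I, ∀ y ∈ I, ¬ Γ.Adj x y) ∧
    ∀ J : Set V, (∀ x ∈ J, ∀ y ∈ J, ¬ Γ.Adj x y) → I ⊆ J → I = J}

namespace MoonMoser

variable {V : Type*} (Γ : SimpleGraph V)

lemma maxIndep_iff (I : Set V) :
    I ∈ maxIndepSets Γ ↔ (∀ x ∈ I, ∀ y ∈ I, ¬ Γ.Adj x y) ∧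
      ∀ w, w ∉ I → ∃ y ∈ I, Γ.Adj w y := by
  constructor
  · rintro ⟨h1, h2⟩
    refine ⟨h1, fun w hw => ?_⟩
    by_contra hc
    push_neg at hc
    have hJ : ∀ x ∈ insert w I, ∀ y ∈ insert w I, ¬ Γ.Adj x y := by
      intro x hx y hy hadj
      rcases Set.mem_insert_iff.mp hx with h | hxI
      · rcases Set.mem_insert_iff.mp hy with h' | hyI
        · subst h; rw [h'] at hadj; exact Γ.irrefl hadj
        · subst h; exact hc y hyI hadj
      · rcases Set.mem_insert_iff.mp hy with h' | hyI
        · subst h'; exact hc x hxI hadj.symm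
        · exact h1 x hxI y hyI hadj
    have := h2 _ hJ (Set.subset_insert w I)
    exact hw (this ▸ Set.mem_insert w I)
  · rintro ⟨h1, h2⟩
    refine ⟨h1, fun J hJ hIJ => ?_⟩
    refine hIJ.antisymm fun w hw => ?_
    by_contra hwI
    obtain ⟨y, hy, hadj⟩ := h2 w hwI
    exact hJ w hw y (hIJ hy) hadj

/-- Restriction of a maximal independent set containing `u` to the complement of
the closed neighborhood of `u`. -/
lemma restrict_mem (u : V) (I : Set V) (hI : I ∈ maxIndepSets Γ) (hu : u ∈ I) :
    {x : ↥((insert u (Γ.neighborSet u))ᶜ : Set V) | x.val ∈ I} ∈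
      maxIndepSets (Γ.induce ((insert u (Γ.neighborSet u))ᶜ : Set V)) := by
  rw [maxIndep_iff] at hI ⊢
  obtain ⟨h1, h2⟩ := hI
  constructor
  · rintro ⟨x, hx⟩ hxI ⟨y, hy⟩ hyI hadj
    exact h1 x hxI y hyI hadj
  · rintro ⟨w, hw⟩ hwI
    obtain ⟨y, hy, hadj⟩ := h2 w hwI
    simp only [Set.mem_compl_iff, Set.mem_insert_iff, SimpleGraph.mem_neighborSet,
      not_or] at hw
    have hyu : y ≠ u := by
      rintro rfl
      exact hw.2 hadj.symm
    have hynb : y ∉ Γ.neighborSet u := fun h => h1 u hu y hy h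
    refine ⟨⟨y, ?_⟩, hy, hadj⟩
    simp only [Set.mem_compl_iff, Set.mem_insert_iff, SimpleGraph.mem_neighborSet, not_or]
    exact ⟨hyu, hynb⟩

/-- Restriction of a maximal independent set avoiding `v` to the complement of `{v}`. -/
lemma restrict_mem' (v : V) (I : Set V) (hI : I ∈ maxIndepSets Γ) (hv : v ∉ I) :
    {x : ↥(({v}ᶜ : Set V)) | x.val ∈ I} ∈ maxIndepSets (Γ.induce ({v}ᶜ : Set V)) := by
  rw [maxIndep_iff] at hI ⊢
  obtain ⟨h1, h2⟩ := hI
  constructor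
  · rintro ⟨x, hx⟩ hxI ⟨y, hy⟩ hyI hadj
    exact h1 x hxI y hyI hadj
  · rintro ⟨w, hw⟩ hwI
    obtain ⟨y, hy, hadj⟩ := h2 w hwI
    have hyv : y ≠ v := fun h => hv (h ▸ hy)
    exact ⟨⟨y, by simpa using hyv⟩, hy, hadj⟩

variable [Finite V]

lemma card_A (u : V) :
    {I | I ∈ maxIndepSets Γ ∧ u ∈ I}.ncard ≤
      (maxIndepSets (Γ.induce ((insert u (Γ.neighborSet u))ᶜ : Set V))).ncard := by
  apply Set.ncard_le_ncard_of_injOn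
    (fun I => {x : ↥((insert u (Γ.neighborSet u))ᶜ : Set V) | x.val ∈ I})
  · rintro I ⟨hI, hu⟩
    exact restrict_mem Γ u I hI hu
  · rintro I ⟨hI, huI⟩ I' ⟨hI', huI'⟩ heq
    have heq' : ∀ x : ↥((insert u (Γ.neighborSet u))ᶜ : Set V), x.val ∈ I ↔ x.val ∈ I' :=
      fun x => Set.ext_iff.mp heq x
    ext x
    by_cases hx : x = u
    · subst hx; simp [huI, huI']
    have key : ∀ J : Set V, J ∈ maxIndepSets Γ → u ∈ J → x ∈ J →
        x ∈ ((insert u (Γ.neighborSet u))ᶜ : Set V) := by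
      intro J hJ huJ hxJ
      simp only [Set.mem_compl_iff, Set.mem_insert_iff, SimpleGraph.mem_neighborSet, not_or]
      exact ⟨hx, fun h => hJ.1 u huJ x hxJ h⟩
    constructor
    · intro hxI
      exact (heq' ⟨x, key I hI huI hxI⟩).mp hxI
    · intro hxI'
      exact (heq' ⟨x, key I' hI' huI' hxI'⟩).mpr hxI'

lemma card_B (v : V) :
    {I | I ∈ maxIndepSets Γ ∧ v ∉ I}.ncard ≤
      (maxIndepSets (Γ.induce ({v}ᶜ : Set V))).ncard := by
  apply Set.ncard_le_ncard_of_injOn (fun I => {x : ↥(({v}ᶜ : Set V)) | x.val ∈ I})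
  · rintro I ⟨hI, hv⟩
    exact restrict_mem' Γ v I hI hv
  · rintro I ⟨hI, hvI⟩ I' ⟨hI', hvI'⟩ heq
    have heq' : ∀ x : ↥(({v}ᶜ : Set V)), x.val ∈ I ↔ x.val ∈ I' :=
      fun x => Set.ext_iff.mp heq x
    ext x
    constructor
    · intro hxI
      have hx : x ≠ v := fun h => hvI (h ▸ hxI)
      exact (heq' ⟨x, by simpa using hx⟩).mp hxI
    · intro hxI'
      have hx : x ≠ v := fun h => hvI' (h ▸ hxI')
      exact (heq' ⟨x, by simpa using hx⟩).mpr hxI'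

lemma key (t : ℝ) (ht3 : t ^ 3 = 3) (ht1 : 1 ≤ t) :
    ∀ n : ℕ, ∀ (W : Type u) [Finite W] (Γ : SimpleGraph W), Nat.card W = n →
      ((maxIndepSets Γ).ncard : ℝ) ≤ t ^ n := by
  have ht0 : (0:ℝ) < t := lt_of_lt_of_le one_pos ht1
  intro n
  induction n using Nat.strong_induction_on with
  | _ n IH =>
  intro W _ Γ hn
  have Hu : ∀ u : W, ∃ m : ℕ, m + 1 + (Γ.neighborSet u).ncard = n ∧
      ({I | I ∈ maxIndepSets Γ ∧ u ∈ I}.ncard : ℝ) ≤ t ^ m := by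
    intro u
    set S : Set W := insert u (Γ.neighborSet u) with hS
    have hScard : S.ncard = (Γ.neighborSet u).ncard + 1 :=
      Set.ncard_insert_of_notMem (by simp) (Set.toFinite _)
    have hcompl : S.ncard + Sᶜ.ncard = Nat.card W := Set.ncard_add_ncard_compl S
    have hcoe : Nat.card ↥(Sᶜ) = Sᶜ.ncard := Nat.card_coe_set_eq _
    refine ⟨Sᶜ.ncard, by omega, ?_⟩
    calc ({I | I ∈ maxIndepSets Γ ∧ u ∈ I}.ncard : ℝ)
        ≤ ((maxIndepSets (Γ.induce (Sᶜ : Set W))).ncard : ℝ) := by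
          exact_mod_cast card_A Γ u
      _ ≤ t ^ Sᶜ.ncard := IH _ (by omega) _ _ hcoe
  have HB : ∀ v : W, ∃ m : ℕ, m + 1 = n ∧
      ({I | I ∈ maxIndepSets Γ ∧ v ∉ I}.ncard : ℝ) ≤ t ^ m := by
    intro v
    have hScard : ({v} : Set W).ncard = 1 := Set.ncard_singleton v
    have hcompl : ({v} : Set W).ncard + ({v}ᶜ : Set W).ncard = Nat.card W :=
      Set.ncard_add_ncard_compl _
    have hcoe : Nat.card ↥(({v}ᶜ : Set W)) = ({v}ᶜ : Set W).ncard := Nat.card_coe_set_eq _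
    refine ⟨({v}ᶜ : Set W).ncard, by omega, ?_⟩
    calc ({I | I ∈ maxIndepSets Γ ∧ v ∉ I}.ncard : ℝ)
        ≤ ((maxIndepSets (Γ.induce (({v}ᶜ : Set W)))).ncard : ℝ) := by
          exact_mod_cast card_B Γ v
      _ ≤ t ^ ({v}ᶜ : Set W).ncard := IH _ (by omega) _ _ hcoe
  rcases Nat.eq_zero_or_pos n with rfl | hnpos
  · -- empty graph: at most one maximal independent set
    have hW : IsEmpty W := by
      rcases Nat.card_eq_zero.mp hn with h | h
      · exact h
      · exact absurd ‹Finite W› h.not_finite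
    have hsub : maxIndepSets Γ ⊆ {(∅ : Set W)} := by
      intro I _
      simp [Set.eq_empty_of_isEmpty I]
    have := Set.ncard_le_ncard hsub (Set.finite_singleton _)
    rw [Set.ncard_singleton] at this
    calc ((maxIndepSets Γ).ncard : ℝ) ≤ 1 := by exact_mod_cast this
      _ = t ^ 0 := by simp
  · have hne : Nonempty W := (Nat.card_pos_iff.mp (hn ▸ hnpos)).1
    -- two-set and three-set covers
    have cover2 : ∀ s₁ s₂ : Set (Set W), maxIndepSets Γ ⊆ s₁ ∪ s₂ →
        ((maxIndepSets Γ).ncard : ℝ) ≤ (s₁.ncard : ℝ) + (s₂.ncard : ℝ) := by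
      intro s₁ s₂ hsub
      have h1 : (maxIndepSets Γ).ncard ≤ (s₁ ∪ s₂).ncard :=
        Set.ncard_le_ncard hsub (Set.toFinite _)
      have h2 := Set.ncard_union_le s₁ s₂
      exact_mod_cast le_trans h1 h2
    have cover3 : ∀ s₁ s₂ s₃ : Set (Set W), maxIndepSets Γ ⊆ s₁ ∪ s₂ ∪ s₃ →
        ((maxIndepSets Γ).ncard : ℝ) ≤ (s₁.ncard : ℝ) + (s₂.ncard : ℝ) + (s₃.ncard : ℝ) := by
      intro s₁ s₂ s₃ hsub
      have h1 : (maxIndepSets Γ).ncard ≤ (s₁ ∪ s₂ ∪ s₃).ncard :=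
        Set.ncard_le_ncard hsub (Set.toFinite _)
      have h2 := Set.ncard_union_le (s₁ ∪ s₂) s₃
      have h3 := Set.ncard_union_le s₁ s₂
      have := le_trans h1 (le_trans h2 (add_le_add_left h3 _))
      exact_mod_cast this
    by_cases h3 : ∃ v : W, 3 ≤ (Γ.neighborSet v).ncard
    · -- a vertex of degree ≥ 3
      obtain ⟨v, hv3⟩ := h3
      obtain ⟨m₁, hm₁, hA⟩ := Hu v
      obtain ⟨m₂, hm₂, hB⟩ := HB v
      have hsub : maxIndepSets Γ ⊆ {I | I ∈ maxIndepSets Γ ∧ v ∈ I} ∪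
          {I | I ∈ maxIndepSets Γ ∧ v ∉ I} := by
        intro I hI
        by_cases h : v ∈ I
        · exact Or.inl ⟨hI, h⟩
        · exact Or.inr ⟨hI, h⟩
      have hle := cover2 _ _ hsub
      have hkey : t ^ m₁ + t ^ m₂ ≤ t ^ n := by
        -- m₁ + 4 ≤ n, m₂ = n - 1
        have h4 : m₁ + 4 ≤ n := by omega
        have hstep : t ^ m₁ ≤ t ^ (n - 4) := pow_le_pow_right₀ ht1 (by omega)
        have hn4 : n - 4 + 4 = n := by omega
        have hn1 : n - 4 + 3 = m₂ := by omega
        have hpos : (0:ℝ) < t ^ (n - 4) := pow_pos ht0 _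
        have e1 : t ^ n = t ^ (n-4) * t ^ 4 := by rw [← pow_add, hn4]
        have e2 : t ^ m₂ = t ^ (n-4) * t ^ 3 := by rw [← pow_add, hn1]
        have ht43 : (4:ℝ) ≤ t * 3 := by nlinarith [sq_nonneg (t - 4/3), sq_nonneg (t + 2)]
        calc t ^ m₁ + t ^ m₂ ≤ t ^ (n-4) + t ^ (n-4) * t ^ 3 := by
              rw [e2]; linarith
          _ = t ^ (n-4) * (1 + t ^ 3) := by ring
          _ ≤ t ^ (n-4) * t ^ 4 := by
              have : (1:ℝ) + t ^ 3 ≤ t ^ 4 := by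
                rw [ht3]; nlinarith
              nlinarith
          _ = t ^ n := e1.symm
      linarith
    · push_neg at h3
      by_cases h0 : ∃ v : W, (Γ.neighborSet v).ncard = 0
      · -- isolated vertex: every maximal independent set contains it
        obtain ⟨v, hv0⟩ := h0
        have hnbr : Γ.neighborSet v = ∅ := (Set.ncard_eq_zero (Set.toFinite _)).mp hv0
        obtain ⟨m, hm, hA⟩ := Hu v
        have hsub : maxIndepSets Γ ⊆ {I | I ∈ maxIndepSets Γ ∧ v ∈ I} := by
          intro I hI
          refine ⟨hI, ?_⟩
          by_contra h
          obtain ⟨y, hy, hadj⟩ := ((maxIndep_iff Γ I).mp hI).2 v h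
          have : y ∈ Γ.neighborSet v := hadj
          rw [hnbr] at this
          exact this
        have h1 : (maxIndepSets Γ).ncard ≤ {I | I ∈ maxIndepSets Γ ∧ v ∈ I}.ncard :=
          Set.ncard_le_ncard hsub (Set.toFinite _)
        have h2 : ((maxIndepSets Γ).ncard : ℝ) ≤ t ^ m := le_trans (by exact_mod_cast h1) hA
        calc ((maxIndepSets Γ).ncard : ℝ) ≤ t ^ m := h2
          _ ≤ t ^ n := pow_le_pow_right₀ ht1 (by omega)
      · push_neg at h0
        by_cases h1 : ∃ v : W, (Γ.neighborSet v).ncard = 1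
        · -- a vertex of degree 1 with neighbor a
          obtain ⟨v, hv1⟩ := h1
          obtain ⟨a, ha⟩ := Set.ncard_eq_one.mp hv1
          have hadjva : Γ.Adj v a := by
            have : a ∈ Γ.neighborSet v := by rw [ha]; rfl
            exact this
          have hdega : 1 ≤ (Γ.neighborSet a).ncard := by
            rw [Nat.one_le_iff_ne_zero]
            intro h
            have : Γ.neighborSet a = ∅ := (Set.ncard_eq_zero (Set.toFinite _)).mp h
            have hv : v ∈ Γ.neighborSet a := hadjva.symm
            rw [this] at hv
            exact hv
          obtain ⟨m₁, hm₁, hAv⟩ := Hu v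
          obtain ⟨m₂, hm₂, hAa⟩ := Hu a
          have hsub : maxIndepSets Γ ⊆ {I | I ∈ maxIndepSets Γ ∧ v ∈ I} ∪
              {I | I ∈ maxIndepSets Γ ∧ a ∈ I} := by
            intro I hI
            by_cases h : v ∈ I
            · exact Or.inl ⟨hI, h⟩
            · obtain ⟨y, hy, hadj⟩ := ((maxIndep_iff Γ I).mp hI).2 v h
              have : y ∈ Γ.neighborSet v := hadj
              rw [ha] at this
              exact Or.inr ⟨hI, this ▸ hy⟩
          have hle := cover2 _ _ hsub
          have hkey : t ^ m₁ + t ^ m₂ ≤ t ^ n := by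
            have hm1' : m₁ + 2 = n := by omega
            have hm2' : m₂ + 2 ≤ n := by omega
            have hstep1 : t ^ m₂ ≤ t ^ (n - 2) := pow_le_pow_right₀ ht1 (by omega)
            have hstep2 : t ^ m₁ ≤ t ^ (n - 2) := pow_le_pow_right₀ ht1 (by omega)
            have hn2 : n - 2 + 2 = n := by omega
            have e1 : t ^ n = t ^ (n-2) * t ^ 2 := by rw [← pow_add, hn2]
            have hpos : (0:ℝ) < t ^ (n - 2) := pow_pos ht0 _
            have ht2 : (2:ℝ) ≤ t ^ 2 := by nlinarith [sq_nonneg (t - 1), sq_nonneg (t^2 - 2)]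
            calc t ^ m₁ + t ^ m₂ ≤ t ^ (n-2) * 2 := by linarith
              _ ≤ t ^ (n-2) * t ^ 2 := by nlinarith
              _ = t ^ n := e1.symm
          linarith
        · -- all degrees equal 2
          push_neg at h1
          obtain ⟨v⟩ := hne
          have hdeg : ∀ u : W, (Γ.neighborSet u).ncard = 2 := by
            intro u
            have := h3 u
            have := h0 u
            have := h1 u
            omega
          obtain ⟨a, b, hab, hnbr⟩ := Set.ncard_eq_two.mp (hdeg v)
          obtain ⟨m₁, hm₁, hAv⟩ := Hu v
          obtain ⟨m₂, hm₂, hAa⟩ := Hu a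
          obtain ⟨m₃, hm₃, hAb⟩ := Hu b
          rw [hdeg v] at hm₁
          rw [hdeg a] at hm₂
          rw [hdeg b] at hm₃
          have hsub : maxIndepSets Γ ⊆ ({I | I ∈ maxIndepSets Γ ∧ v ∈ I} ∪
              {I | I ∈ maxIndepSets Γ ∧ a ∈ I}) ∪ {I | I ∈ maxIndepSets Γ ∧ b ∈ I} := by
            intro I hI
            by_cases h : v ∈ I
            · exact Or.inl (Or.inl ⟨hI, h⟩)
            · obtain ⟨y, hy, hadj⟩ := ((maxIndep_iff Γ I).mp hI).2 v h
              have hyv : y ∈ Γ.neighborSet v := hadj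
              rw [hnbr] at hyv
              rcases hyv with rfl | rfl
              · exact Or.inl (Or.inr ⟨hI, hy⟩)
              · exact Or.inr ⟨hI, hy⟩
          have hle := cover3 _ _ _ hsub
          have hm : m₁ = n - 3 ∧ m₂ = n - 3 ∧ m₃ = n - 3 ∧ n - 3 + 3 = n := by omega
          obtain ⟨e₁, e₂, e₃, e₄⟩ := hm
          have e5 : t ^ n = t ^ (n-3) * t ^ 3 := by rw [← pow_add, e₄]
          have hpos : (0:ℝ) < t ^ (n - 3) := pow_pos ht0 _
          have hkey : t ^ m₁ + t ^ m₂ + t ^ m₃ ≤ t ^ n := by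
            rw [e₁, e₂, e₃, e5, ht3]
            linarith
          linarith

end MoonMoser

/-- Moon–Moser: every graph on `n` vertices has at most `3^{n/3}`
maximal independent sets. -/
theorem stmt6 (V : Type*) [Finite V] (Γ : SimpleGraph V) :
    ((maxIndepSets Γ).ncard : ℝ) ≤ (3 : ℝ) ^ ((Nat.card V : ℝ) / 3) := by
  set t : ℝ := (3 : ℝ) ^ ((1:ℝ)/3) with htdef
  have h3 : (0:ℝ) < 3 := by norm_num
  have ht0 : (0:ℝ) < t := Real.rpow_pos_of_pos h3 _
  have ht3 : t ^ 3 = 3 := by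
    rw [htdef, ← Real.rpow_natCast ((3:ℝ) ^ ((1:ℝ)/3)) 3, ← Real.rpow_mul (le_of_lt h3)]
    norm_num
  have ht1 : 1 ≤ t := by
    by_contra h
    push_neg at h
    have := pow_lt_one₀ (le_of_lt ht0) h (by norm_num : (3:ℕ) ≠ 0)
    rw [ht3] at this
    norm_num at this
  have hkey := MoonMoser.key t ht3 ht1 (Nat.card V) V Γ rfl
  have heq : t ^ (Nat.card V) = (3:ℝ) ^ ((Nat.card V : ℝ) / 3) := by
    rw [htdef, ← Real.rpow_natCast ((3:ℝ) ^ ((1:ℝ)/3)) (Nat.card V),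
      ← Real.rpow_mul (le_of_lt h3)]
    norm_num
    ring_nf
  rw [← heq]
  exact hkey
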